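/- Let a_1,a_2,a_3,a_4 be nonzero integers with gcd(a_1,a_4)=1, and let a_12,a_23,a_34 be integers satisfying the congruences a_3·a_23 ≡ a_1·a_12 (mod a_4) and a_4·a_34 ≡ a_2·a_23 (mod a_1). Then the rational numbers a_13 = (a_2·a_23 − a_4·a_34)/a_1, a_24 = (a_3·a_23 − a_1·a_12)/a_4, and a_14 = (a_2·a_3·a_23 − a_3·a_4·a_34 − a_1·a_2·a_12)/(a_1·a_4) are all integers. -/

import Mathlib

theorem stmt_0 (a1 a2 a3 a4 a12 a23 a34 : ℤ)
    (ha1 : a1 ≠ 0) (ha2 : a2 ≠ 0) (ha3 : a3 ≠ 0) (ha4 : a4 ≠ 0)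
    (hcop : Int.gcd a1 a4 = 1)
    (hc1 : a4 ∣ a3 * a23 - a1 * a12)
    (hc2 : a1 ∣ a4 * a34 - a2 * a23) :
    a1 ∣ a2 * a23 - a4 * a34 ∧
    a4 ∣ a3 * a23 - a1 * a12 ∧
    a1 * a4 ∣ a2 * a3 * a23 - a3 * a4 * a34 - a1 * a2 * a12 := by
  have h1 : a1 ∣ a2 * a23 - a4 * a34 := by
    have := hc2.neg_right; simpa using this
  refine ⟨h1, hc1, ?_⟩
  have hA : a1 ∣ a2 * a3 * a23 - a3 * a4 * a34 - a1 * a2 * a12 := by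
    have := dvd_mul_of_dvd_right h1 a3
    have h2 : a1 ∣ a1 * a2 * a12 := ⟨a2 * a12, by ring⟩
    have := dvd_sub this h2
    convert this using 1
    · rfl
    ring
  have hB : a4 ∣ a2 * a3 * a23 - a3 * a4 * a34 - a1 * a2 * a12 := by
    have := dvd_mul_of_dvd_right hc1 a2
    have h2 : a4 ∣ a3 * a4 * a34 := ⟨a3 * a34, by ring⟩
    have := dvd_sub this h2
    convert this using 1
    · rfl
    ring
  exact (Int.isCoprime_iff_gcd_eq_one.mpr hcop).mul_dvd hA hB
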